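/- Let W be a real vector space with a nondegenerate symmetric bilinear form g of signature (2k, 2l), and let J be a complex structure on W compatible with g (i.e. J² = −Id and J is g-skew-symmetric). Then there exists an orthonormal basis {e_1,...,e_{2k+2l}} of W (with ‖e_1‖² = ... = ‖e_{2k}‖² = 1 and ‖e_{2k+1}‖² = ... = ‖e_{2k+2l}‖² = −1) such that e_{2i} = J e_{2i−1} for i = 1,...,k+l. -/

import Mathlib

open Module Submodule Finset

section helpers
variable {W : Type*} [AddCommGroup W] [Module ℝ W]

/-- orthogonal family with nonzero self-pairings is linearly independent -/
lemma lindep_of_ortho {ι : Type*} [Fintype ι] (g : W →ₗ[ℝ] W →ₗ[ℝ] ℝ)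
    (x : ι → W) (horth : ∀ i j, i ≠ j → g (x i) (x j) = 0)
    (hnz : ∀ i, g (x i) (x i) ≠ 0) : LinearIndependent ℝ x := by
  rw [Fintype.linearIndependent_iff]
  intro c hc j
  have h := congrArg (fun y => g y (x j)) hc
  simp only [map_sum, map_smul, LinearMap.sum_apply, LinearMap.smul_apply, map_zero,
    LinearMap.zero_apply, smul_eq_mul] at h
  rw [Finset.sum_eq_single j] at h
  · rcases mul_eq_zero.mp h with h | h
    · exact h
    · exact absurd h (hnz j)
  · intro i _ hij
    rw [horth i j hij, mul_zero]
  · intro h; exact absurd (Finset.mem_univ j) h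

lemma gsum_sum {ι : Type*} [Fintype ι] (g : W →ₗ[ℝ] W →ₗ[ℝ] ℝ)
    (x : ι → W) (horth : ∀ i j, i ≠ j → g (x i) (x j) = 0) (c : ι → ℝ) :
    g (∑ i, c i • x i) (∑ i, c i • x i) = ∑ i, c i ^ 2 * g (x i) (x i) := by
  simp only [map_sum, map_smul, LinearMap.sum_apply, LinearMap.smul_apply, smul_eq_mul]
  refine Finset.sum_congr rfl fun j _ => ?_
  rw [Finset.sum_eq_single j]
  · ring
  · intro i _ hij
    rw [horth i j hij]; ring
  · intro h; exact absurd (Finset.mem_univ j) h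

end helpers

section sig
variable {W : Type*} [AddCommGroup W] [Module ℝ W]

lemma sig_le [FiniteDimensional ℝ W] {n : ℕ} (g : W →ₗ[ℝ] W →ₗ[ℝ] ℝ)
    (e e' : Basis (Fin n) ℝ W)
    (he : ∀ i j, i ≠ j → g (e i) (e j) = 0) (he' : ∀ i j, i ≠ j → g (e' i) (e' j) = 0)
    (hen : ∀ i, g (e i) (e i) = 1 ∨ g (e i) (e i) = -1)
    (he'n : ∀ i, g (e' i) (e' i) = 1 ∨ g (e' i) (e' i) = -1) :
    (univ.filter fun i => g (e i) (e i) = 1).card ≤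
      (univ.filter fun i => g (e' i) (e' i) = 1).card := by
  classical
  let P : Fin n → Prop := fun i => g (e i) (e i) = 1
  let Q : Fin n → Prop := fun i => g (e' i) (e' i) = 1
  let U : Submodule ℝ W := span ℝ (Set.range fun i : {i // P i} => e ↑i)
  let V : Submodule ℝ W := span ℝ (Set.range fun i : {i // ¬ Q i} => e' ↑i)
  have hoP : ∀ (i j : {i // P i}), i ≠ j → g (e ↑i) (e ↑j) = 0 :=
    fun i j hij => he i.1 j.1 (fun h => hij (Subtype.ext h))
  have hoQ : ∀ (i j : {i // ¬ Q i}), i ≠ j → g (e' ↑i) (e' ↑j) = 0 :=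
    fun i j hij => he' i.1 j.1 (fun h => hij (Subtype.ext h))
  have hdis : Disjoint U V := by
    rw [Submodule.disjoint_def]
    intro x hxU hxV
    obtain ⟨a, ha⟩ := (mem_span_range_iff_exists_fun ℝ).mp hxU
    obtain ⟨b, hb⟩ := (mem_span_range_iff_exists_fun ℝ).mp hxV
    have h1 : g x x = ∑ i : {i // P i}, a i ^ 2 := by
      have h0 := gsum_sum g (fun i : {i // P i} => e ↑i) hoP a
      rw [ha] at h0
      rw [h0]
      refine Finset.sum_congr rfl fun i _ => ?_
      rw [i.prop, mul_one]
    have h2 : g x x = ∑ i : {i // ¬ Q i}, b i ^ 2 * (-1) := by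
      have h0 := gsum_sum g (fun i : {i // ¬ Q i} => e' ↑i) hoQ b
      rw [hb] at h0
      rw [h0]
      refine Finset.sum_congr rfl fun i _ => ?_
      rcases he'n ↑i with h | h
      · exact absurd h i.prop
      · rw [h]
    have h3 : g x x ≤ 0 := by
      rw [h2]
      apply Finset.sum_nonpos
      intro i _
      nlinarith [sq_nonneg (b i)]
    have h4 : ∀ i : {i // P i}, a i = 0 := by
      have h5 : ∑ i : {i // P i}, a i ^ 2 = 0 := by
        have h6 : (0:ℝ) ≤ ∑ i : {i // P i}, a i ^ 2 :=
          Finset.sum_nonneg fun i _ => sq_nonneg _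
        linarith [h1 ▸ h3]
      intro i
      have := (Finset.sum_eq_zero_iff_of_nonneg (fun i _ => sq_nonneg (a i))).mp h5 i
        (Finset.mem_univ i)
      exact pow_eq_zero_iff two_ne_zero |>.mp this
    rw [← ha]
    exact Finset.sum_eq_zero fun i _ => by rw [h4 i, zero_smul]
  have hliU : LinearIndependent ℝ (fun i : {i // P i} => e ↑i) :=
    e.linearIndependent.comp _ Subtype.val_injective
  have hliV : LinearIndependent ℝ (fun i : {i // ¬ Q i} => e' ↑i) :=
    e'.linearIndependent.comp _ Subtype.val_injective
  have hrU : finrank ℝ U = (univ.filter P).card := by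
    rw [show finrank ℝ U = _ from finrank_span_eq_card hliU, Fintype.card_subtype]
  have hrV : finrank ℝ V = n - (univ.filter Q).card := by
    rw [show finrank ℝ V = _ from finrank_span_eq_card hliV, Fintype.card_subtype_compl,
      Fintype.card_fin, Fintype.card_subtype]
  have hrW : finrank ℝ W = n := by rw [finrank_eq_card_basis e, Fintype.card_fin]
  have hle := Submodule.finrank_add_finrank_le_of_disjoint hdis
  rw [hrU, hrV, hrW] at hle
  have hQn : (univ.filter Q).card ≤ n := by
    calc (univ.filter Q).card ≤ (univ : Finset (Fin n)).card := Finset.card_filter_le _ _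
    _ = n := by simp
  have e1 : (univ.filter fun i => g (e i) (e i) = 1).card = (univ.filter P).card :=
    (Finset.filter_congr_decidable univ P _).symm ▸ rfl
  have e2 : (univ.filter fun i => g (e' i) (e' i) = 1).card = (univ.filter Q).card :=
    (Finset.filter_congr_decidable univ Q _).symm ▸ rfl
  omega

lemma sig_eq [FiniteDimensional ℝ W] {n : ℕ} (g : W →ₗ[ℝ] W →ₗ[ℝ] ℝ)
    (e e' : Basis (Fin n) ℝ W)
    (he : ∀ i j, i ≠ j → g (e i) (e j) = 0) (he' : ∀ i j, i ≠ j → g (e' i) (e' j) = 0)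
    (hen : ∀ i, g (e i) (e i) = 1 ∨ g (e i) (e i) = -1)
    (he'n : ∀ i, g (e' i) (e' i) = 1 ∨ g (e' i) (e' i) = -1) :
    (univ.filter fun i => g (e i) (e i) = 1).card =
      (univ.filter fun i => g (e' i) (e' i) = 1).card :=
  le_antisymm (sig_le g e e' he he' hen he'n) (sig_le g e' e he' he he'n hen)

end sig

section more
variable {W : Type*} [AddCommGroup W] [Module ℝ W]

lemma cons_mk_zero' {α : Type*} {n : ℕ} (x : α) (q : Fin n → α) (h : 0 < n + 1) :
    Fin.cons (α := fun _ => α) x q ⟨0, h⟩ = x := by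
  have : (⟨0, h⟩ : Fin (n+1)) = 0 := rfl
  rw [this, Fin.cons_zero]

lemma cons_mk_succ' {α : Type*} {n : ℕ} (x : α) (q : Fin n → α) (t : ℕ) (h : t + 1 < n + 1) :
    Fin.cons (α := fun _ => α) x q ⟨t+1, h⟩ = q ⟨t, Nat.lt_of_succ_lt_succ h⟩ := by
  have : (⟨t+1, h⟩ : Fin (n+1)) = Fin.succ ⟨t, Nat.lt_of_succ_lt_succ h⟩ := rfl
  rw [this, Fin.cons_succ]

lemma cons_ortho {n : ℕ} (g : W →ₗ[ℝ] W →ₗ[ℝ] ℝ) (hsymm : ∀ v w, g v w = g w v)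
    (x : W) (q : Fin n → W) (hx : ∀ i, g x (q i) = 0)
    (hq : ∀ i j, i ≠ j → g (q i) (q j) = 0) :
    ∀ i j, i ≠ j → g (Fin.cons (α := fun _ => W) x q i) (Fin.cons (α := fun _ => W) x q j) = 0 := by
  intro i j hij
  rcases Fin.eq_zero_or_eq_succ i with rfl | ⟨i', rfl⟩ <;>
    rcases Fin.eq_zero_or_eq_succ j with rfl | ⟨j', rfl⟩
  · exact absurd rfl hij
  · rw [Fin.cons_zero, Fin.cons_succ]; exact hx j'
  · rw [Fin.cons_succ, Fin.cons_zero, hsymm]; exact hx i'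
  · rw [Fin.cons_succ, Fin.cons_succ]
    exact hq i' j' fun h => hij (by rw [h])

lemma card_filter_val_lt (N t : ℕ) (h : t ≤ N) :
    ((univ : Finset (Fin N)).filter fun j : Fin N => (j : ℕ) < t).card = t := by
  have : ((univ : Finset (Fin N)).filter fun j : Fin N => (j : ℕ) < t)
      = Finset.map (Fin.castLEEmb h) univ := by
    ext j
    simp only [Finset.mem_filter, Finset.mem_univ, true_and, Finset.mem_map,
      Fin.castLEEmb_apply]
    constructor
    · intro hj; exact ⟨⟨(j : ℕ), hj⟩, by ext; simp⟩
    · rintro ⟨i, rfl⟩; simpa using i.isLt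
  rw [this, Finset.card_map, Finset.card_univ, Fintype.card_fin]

end more

universe u

set_option maxHeartbeats 2000000 in
theorem main_ind (n : ℕ) : ∀ {W : Type u} [AddCommGroup W] [Module ℝ W] (k l : ℕ), k + l = n →
    ∀ (g : W →ₗ[ℝ] W →ₗ[ℝ] ℝ), (∀ v w, g v w = g w v) →
    ∀ (J : W →ₗ[ℝ] W), (∀ x, J (J x) = -x) →
    (∀ v w, g (J v) w = - g v (J w)) →
    ∀ (f : Basis (Fin (2 * k + 2 * l)) ℝ W),
    (∀ i j, i ≠ j → g (f i) (f j) = 0) →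
    (∀ i : Fin (2 * k + 2 * l), g (f i) (f i) = if (i : ℕ) < 2 * k then 1 else -1) →
    ∃ e : Basis (Fin (2 * k + 2 * l)) ℝ W,
      (∀ i j, i ≠ j → g (e i) (e j) = 0) ∧
      (∀ i : Fin (2 * k + 2 * l), g (e i) (e i) = if (i : ℕ) < 2 * k then 1 else -1) ∧
      (∀ i : Fin (k + l), ∀ (h1 : 2 * (i : ℕ) + 1 < 2 * k + 2 * l)
        (h0 : 2 * (i : ℕ) < 2 * k + 2 * l),
        e ⟨2 * (i : ℕ) + 1, h1⟩ = J (e ⟨2 * (i : ℕ), h0⟩)) := by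
  induction n with
  | zero =>
    intro W _ _ k l hn g hsymm J hJ2 hskew f hforth hfnorm
    refine ⟨f, hforth, hfnorm, fun i => absurd i.isLt (by omega)⟩
  | succ n IH =>
    intro W _ _ k l hn g hsymm J hJ2 hskew f hforth hfnorm
    classical
    have hfd : FiniteDimensional ℝ W := Module.Finite.of_basis f
    have hN : finrank ℝ W = 2 * k + 2 * l := by
      rw [finrank_eq_card_basis f, Fintype.card_fin]
    have hNpos : 0 < 2 * k + 2 * l := by omega
    -- nondegeneracy
    have hnd : ∀ x : W, (∀ y, g x y = 0) → x = 0 := by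
      intro x hx
      have hrepr : ∀ j, f.repr x j = 0 := by
        intro j
        have h1 := hx (f j)
        have h2 : g x (f j) = ∑ i, f.repr x i * g (f i) (f j) := by
          conv_lhs => rw [← f.sum_repr x]
          simp only [map_sum, map_smul, LinearMap.sum_apply, LinearMap.smul_apply, smul_eq_mul]
        rw [Finset.sum_eq_single j] at h2
        · rw [h1, hfnorm j] at h2
          split at h2 <;> linarith
        · intro i _ hij; rw [hforth i j hij, mul_zero]
        · intro h; exact absurd (Finset.mem_univ j) h
      exact f.ext_elem fun j => by rw [hrepr j]; simp
    -- the distinguished vector and its partner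
    set v : W := f ⟨0, hNpos⟩ with hvdef
    set ε : ℝ := if 0 < k then 1 else -1 with hεdef
    have hvv : g v v = ε := by rw [hεdef]; simpa using hfnorm ⟨0, hNpos⟩
    have hε : ε = 1 ∨ ε = -1 := by
      by_cases h : 0 < k <;> simp [hεdef, h]
    have hε2 : ε * ε = 1 := by rcases hε with h | h <;> rw [h] <;> ring
    set w : W := J v with hwdef
    have hvw : g v w = 0 := by
      have h1 := hskew v v
      have h2 := hsymm (J v) v
      rw [hwdef]; linarith
    have hwv : g w v = 0 := by rw [hsymm]; exact hvw
    have hww : g w w = ε := by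
      have h1 := hskew v (J v)
      rw [hJ2 v] at h1
      rw [hwdef]
      rw [h1, map_neg]
      rw [hvv]; ring
    -- the orthogonal complement of span {v, w}
    set φ : W →ₗ[ℝ] ℝ × ℝ := (g v).prod (g w) with hφdef
    set W' : Submodule ℝ W := LinearMap.ker φ with hW'def
    have hmem : ∀ x : W, x ∈ W' ↔ g v x = 0 ∧ g w x = 0 := by
      intro x
      simp [hW'def, LinearMap.mem_ker, hφdef, LinearMap.prod_apply, Prod.ext_iff]
    have hsurj : Function.Surjective φ := by
      rintro ⟨a, b⟩
      refine ⟨(a * ε) • v + (b * ε) • w, ?_⟩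
      have h1 : g v ((a * ε) • v + (b * ε) • w) = a := by
        simp only [map_add, map_smul, smul_eq_mul, hvv, hvw]
        linear_combination a * hε2
      have h2 : g w ((a * ε) • v + (b * ε) • w) = b := by
        simp only [map_add, map_smul, smul_eq_mul, hww, hwv]
        linear_combination b * hε2
      simp [hφdef, LinearMap.prod_apply, h1, h2]
    set m : ℕ := finrank ℝ W' with hmdef
    have hm : m = 2 * k + 2 * l - 2 := by
      have hrk : finrank ℝ (ℝ × ℝ) = 2 := by
        rw [Module.finrank_prod, Module.finrank_self]
      have h1 := LinearMap.finrank_range_add_finrank_ker φ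
      rw [LinearMap.range_eq_top.mpr hsurj, finrank_top, hrk, hN] at h1
      have h2 : 2 + m = 2 * k + 2 * l := h1
      omega
    have hNm : 2 * k + 2 * l = m + 1 + 1 := by omega
    -- J preserves W'
    have hJW' : ∀ x ∈ W', J x ∈ W' := by
      intro x hx
      rw [hmem] at hx ⊢
      obtain ⟨hx1, hx2⟩ := hx
      constructor
      · have h1 := hskew v x
        rw [← hwdef] at h1
        rw [hx2] at h1; linarith
      · have h1 := hskew v (J x)
        rw [hJ2 x] at h1
        rw [← hwdef] at h1
        rw [h1, map_neg, hx1]; ring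
    set J' : W' →ₗ[ℝ] W' := J.restrict hJW' with hJ'def
    have hJ'coe : ∀ x : W', (↑(J' x) : W) = J ↑x := fun x => rfl
    set g' : W' →ₗ[ℝ] W' →ₗ[ℝ] ℝ := g.compl₁₂ W'.subtype W'.subtype with hg'def
    have hg' : ∀ x y : W', g' x y = g ↑x ↑y := fun x y => rfl
    have hg'symm : ∀ x y : W', g' x y = g' y x := fun x y => hsymm ↑x ↑y
    have hJ'2 : ∀ x : W', J' (J' x) = -x := by
      intro x
      apply Subtype.ext
      rw [Submodule.coe_neg]
      rw [hJ'coe, hJ'coe]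
      exact hJ2 ↑x
    have hJ'skew : ∀ x y : W', g' (J' x) y = - g' x (J' y) := by
      intro x y
      rw [hg', hg', hJ'coe, hJ'coe]
      exact hskew ↑x ↑y
    -- orthogonal basis of W'
    have hg'sym : g'.IsSymm := ⟨fun x y => hg'symm x y⟩
    obtain ⟨b, hb⟩ := LinearMap.BilinForm.exists_orthogonal_basis hg'sym
    have horthb : ∀ i j, i ≠ j → g' (b i) (b j) = 0 := fun i j hij => hb hij
    -- nonzero diagonal
    have hbnz : ∀ i, g' (b i) (b i) ≠ 0 := by
      intro i h0
      have hall : ∀ y : W', g' (b i) y = 0 := by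
        intro y
        have h2 : g' (b i) y = ∑ j, b.repr y j * g' (b i) (b j) := by
          conv_lhs => rw [← b.sum_repr y]
          simp only [map_sum, map_smul, LinearMap.sum_apply, LinearMap.smul_apply, smul_eq_mul]
        rw [h2]
        apply Finset.sum_eq_zero
        intro j _
        rcases eq_or_ne j i with rfl | hij
        · rw [h0, mul_zero]
        · rw [horthb i j (Ne.symm hij), mul_zero]
      have hallW : ∀ y : W, g ↑(b i) y = 0 := by
        intro y
        have hpy : (y - (ε * g v y) • v - (ε * g w y) • w) ∈ W' := by
          rw [hmem]
          constructor
          · simp only [map_sub, map_smul, smul_eq_mul, hvv, hvw]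
            linear_combination -(g v y) * hε2
          · simp only [map_sub, map_smul, smul_eq_mul, hww, hwv]
            linear_combination -(g w y) * hε2
        have h3 : g ↑(b i) (y - (ε * g v y) • v - (ε * g w y) • w) = 0 := hall ⟨_, hpy⟩
        have h4 : g ↑(b i) v = 0 := by
          have hbm := (b i).2
          rw [hmem] at hbm
          rw [hsymm]; exact hbm.1
        have h5 : g ↑(b i) w = 0 := by
          have hbm := (b i).2
          rw [hmem] at hbm
          rw [hsymm]; exact hbm.2
        simp only [map_sub, map_smul, smul_eq_mul, h4, h5, mul_zero, sub_zero] at h3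
        exact h3
      have : (↑(b i) : W) = 0 := hnd _ hallW
      exact b.ne_zero i (by exact_mod_cast this)
    -- rescale to norms ±1
    set u : Fin m → ℝˣ := fun i => Units.mk0 ((Real.sqrt |g' (b i) (b i)|)⁻¹)
      (inv_ne_zero (ne_of_gt (Real.sqrt_pos.mpr (abs_pos.mpr (hbnz i))))) with hudef
    set c : Basis (Fin m) ℝ W' := b.unitsSMul u with hcdef
    have hcapp : ∀ i, c i = ((Real.sqrt |g' (b i) (b i)|)⁻¹ : ℝ) • b i := by
      intro i
      rw [hcdef, Basis.unitsSMul_apply]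
      rfl
    have hcorth : ∀ i j, i ≠ j → g' (c i) (c j) = 0 := by
      intro i j hij
      rw [hcapp, hcapp]
      simp only [map_smul, LinearMap.smul_apply, smul_eq_mul]
      rw [horthb i j hij]
      ring
    have hcnorm : ∀ i, g' (c i) (c i) = if 0 < g' (b i) (b i) then 1 else -1 := by
      intro i
      have hs : Real.sqrt |g' (b i) (b i)| * Real.sqrt |g' (b i) (b i)| = |g' (b i) (b i)| :=
        Real.mul_self_sqrt (abs_nonneg _)
      have hsne : Real.sqrt |g' (b i) (b i)| ≠ 0 :=
        ne_of_gt (Real.sqrt_pos.mpr (abs_pos.mpr (hbnz i)))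
      rw [hcapp]
      simp only [map_smul, LinearMap.smul_apply, smul_eq_mul]
      have key : (Real.sqrt |g' (b i) (b i)|)⁻¹ * ((Real.sqrt |g' (b i) (b i)|)⁻¹
          * g' (b i) (b i)) = g' (b i) (b i) / |g' (b i) (b i)| := by
        rw [← hs]
        field_simp
        rw [Real.sq_sqrt (sq_nonneg (Real.sqrt |g' (b i) (b i)|))]
      rw [key]
      by_cases hd : 0 < g' (b i) (b i)
      · rw [if_pos hd, abs_of_pos hd, div_self (ne_of_gt hd)]
      · have hd' : g' (b i) (b i) < 0 := lt_of_le_of_ne (not_lt.mp hd) (hbnz i)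
        rw [if_neg hd, abs_of_neg hd', div_neg, div_self (hbnz i)]
    have hcsign : ∀ i, g' (c i) (c i) = 1 ∨ g' (c i) (c i) = -1 := by
      intro i; rw [hcnorm i]; split <;> simp
    -- predicates and counting
    set cc : Fin m → W := fun i => ↑(c i) with hccdef
    have hccW' : ∀ i, cc i ∈ W' := fun i => (c i).2
    set Pc : Fin m → Prop := fun i => g (cc i) (cc i) = 1 with hPcdef
    have hPc' : ∀ i, Pc i ↔ g' (c i) (c i) = 1 := fun i => Iff.rfl
    set p : ℕ := (univ.filter Pc).card with hpdef
    have hple : p ≤ m := by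
      calc p ≤ (univ : Finset (Fin m)).card := Finset.card_filter_le _ _
      _ = m := by simp
    have hcard1 : Fintype.card {i // Pc i} = p := by rw [Fintype.card_subtype]
    have hcard2 : Fintype.card {i // ¬ Pc i} = m - p := by
      rw [Fintype.card_subtype_compl, hcard1, Fintype.card_fin]
    have hpm : m = p + (m - p) := by omega
    set e₁ := Fintype.equivFinOfCardEq hcard1 with he₁def
    set e₂ := Fintype.equivFinOfCardEq hcard2 with he₂def
    set ρ : Fin m ≃ Fin m :=
      (finCongr hpm).trans (finSumFinEquiv.symm.trans
        ((Equiv.sumCongr e₁ e₂).symm.trans (Equiv.sumCompl Pc))) with hρdef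
    have hρ : ∀ j : Fin m, Pc (ρ j) ↔ (j : ℕ) < p := by
      intro j
      rcases hsplit : finSumFinEquiv.symm (finCongr hpm j) with a | a
      · have hval : (j : ℕ) = (a : ℕ) := by
          have h1 := congrArg finSumFinEquiv hsplit
          rw [Equiv.apply_symm_apply, finSumFinEquiv_apply_left] at h1
          have h2 := congrArg Fin.val h1
          simpa using h2
        have happ : ρ j = ↑(e₁.symm a) := by
          rw [hρdef]
          simp only [Equiv.trans_apply, hsplit, Equiv.sumCongr_symm, Equiv.sumCongr_apply,
            Sum.map_inl, Equiv.sumCompl_apply_inl]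
        rw [happ, hval]
        exact iff_of_true (e₁.symm a).prop a.isLt
      · have hval : (j : ℕ) = p + (a : ℕ) := by
          have h1 := congrArg finSumFinEquiv hsplit
          rw [Equiv.apply_symm_apply, finSumFinEquiv_apply_right] at h1
          have h2 := congrArg Fin.val h1
          simpa using h2
        have happ : ρ j = ↑(e₂.symm a) := by
          rw [hρdef]
          simp only [Equiv.trans_apply, hsplit, Equiv.sumCongr_symm, Equiv.sumCongr_apply,
            Sum.map_inr, Equiv.sumCompl_apply_inr]
        rw [happ]
        exact iff_of_false (e₂.symm a).prop (by omega)
    have hf2app : ∀ j, (c.reindex ρ.symm) j = c (ρ j) := by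
      intro j; rw [Basis.reindex_apply, Equiv.symm_symm]
    have hf2orth : ∀ i j, i ≠ j →
        g' ((c.reindex ρ.symm) i) ((c.reindex ρ.symm) j) = 0 := by
      intro i j hij
      rw [hf2app, hf2app]
      exact hcorth _ _ (fun h => hij (ρ.injective h))
    have hf2norm : ∀ j, g' ((c.reindex ρ.symm) j) ((c.reindex ρ.symm) j)
        = if (j : ℕ) < p then 1 else -1 := by
      intro j
      rw [hf2app]
      by_cases hj : (j : ℕ) < p
      · rw [if_pos hj]; exact (hρ j).mpr hj
      · rw [if_neg hj]
        rcases hcsign (ρ j) with h | h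
        · exact absurd ((hρ j).mp h) hj
        · exact h
    -- the combined basis for counting
    set E : Fin (m + 1 + 1) → W := Fin.cons v (Fin.cons w cc) with hEdef
    have hEorth : ∀ i j, i ≠ j → g (E i) (E j) = 0 := by
      rw [hEdef]
      apply cons_ortho g hsymm
      · intro i
        rcases Fin.eq_zero_or_eq_succ i with rfl | ⟨i', rfl⟩
        · rw [Fin.cons_zero]; exact hvw
        · rw [Fin.cons_succ]
          exact ((hmem (cc i')).mp (hccW' i')).1
      · apply cons_ortho g hsymm
        · intro i; exact ((hmem (cc i)).mp (hccW' i)).2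
        · intro i j hij; exact hcorth i j hij
    have hEnorm1 : ∀ j, g (E j) (E j) = 1 ∨ g (E j) (E j) = -1 := by
      intro j
      rw [hEdef]
      rcases Fin.eq_zero_or_eq_succ j with rfl | ⟨j', rfl⟩
      · rw [Fin.cons_zero, hvv]; exact hε
      · rw [Fin.cons_succ]
        rcases Fin.eq_zero_or_eq_succ j' with rfl | ⟨j'', rfl⟩
        · rw [Fin.cons_zero, hww]; exact hε
        · rw [Fin.cons_succ]; exact hcsign j''
    have hEnz : ∀ j, g (E j) (E j) ≠ 0 := by
      intro j; rcases hEnorm1 j with h | h <;> rw [h] <;> norm_num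
    have hEli : LinearIndependent ℝ E := lindep_of_ortho g E hEorth hEnz
    have hEcard : Fintype.card (Fin (m + 1 + 1)) = finrank ℝ W := by
      rw [Fintype.card_fin, hN]; omega
    set EB : Basis (Fin (m + 1 + 1)) ℝ W :=
      basisOfLinearIndependentOfCardEqFinrank hEli hEcard with hEBdef
    have hEB : ⇑EB = E := coe_basisOfLinearIndependentOfCardEqFinrank hEli hEcard
    set fB : Basis (Fin (m + 1 + 1)) ℝ W := f.reindex (finCongr hNm) with hfBdef
    have hfBapp : ∀ j : Fin (m+1+1), fB j = f ((finCongr hNm).symm j) := by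
      intro j; rw [hfBdef, Basis.reindex_apply]
    have hfBnorm : ∀ j : Fin (m+1+1), g (fB j) (fB j) = if (j : ℕ) < 2*k then 1 else -1 := by
      intro j
      rw [hfBapp, hfnorm]
      have hval : (((finCongr hNm).symm j : Fin (2*k+2*l)) : ℕ) = (j : ℕ) := by simp
      rw [hval]
    have hfBorth : ∀ i j, i ≠ j → g (fB i) (fB j) = 0 := by
      intro i j hij
      rw [hfBapp, hfBapp]
      exact hforth _ _ (fun h => hij ((finCongr hNm).symm.injective h))
    have hfBsign : ∀ j, g (fB j) (fB j) = 1 ∨ g (fB j) (fB j) = -1 := by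
      intro j; rw [hfBnorm]; split <;> simp
    have hsig := sig_eq g EB fB
      (by intro i j hij; rw [hEB]; exact hEorth i j hij) hfBorth
      (by intro j; rw [hEB]; exact hEnorm1 j) hfBsign
    have hcardfB : (univ.filter fun j => g (fB j) (fB j) = 1).card = 2*k := by
      have h1 : (univ.filter fun j => g (fB j) (fB j) = 1)
          = (univ.filter fun j : Fin (m+1+1) => (j:ℕ) < 2*k) := by
        apply Finset.filter_congr
        intro j _
        rw [hfBnorm j]
        by_cases hj : (j:ℕ) < 2*k
        · rw [if_pos hj]; exact iff_of_true rfl hj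
        · rw [if_neg hj]; exact iff_of_false (by norm_num) hj
      rw [h1, card_filter_val_lt _ _ (by omega)]
    have hcardEB : (univ.filter fun j => g (EB j) (EB j) = 1).card
        = (if 0 < k then 2 else 0) + p := by
      have h1 : (univ.filter fun j => g (EB j) (EB j) = 1)
          = (univ.filter fun j => g (E j) (E j) = 1) := by
        apply Finset.filter_congr
        intro j _
        rw [hEB]
      rw [h1, Finset.card_filter]
      simp only [hEdef, Fin.sum_univ_succ, Fin.cons_zero, Fin.cons_succ]
      rw [hvv, hww]
      have hlast : (∑ j : Fin m, if g (cc j) (cc j) = 1 then (1:ℕ) else 0) = p := by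
        rw [hpdef, Finset.card_filter]
      rw [hlast]
      rcases hε with h | h
      · have hk : 0 < k := by
          by_contra hk
          rw [hεdef, if_neg hk] at h; norm_num at h
        rw [h]
        norm_num [hk]
        omega
      · have hk : ¬ 0 < k := fun hk => by
          rw [hεdef, if_pos hk] at h; norm_num at h
        rw [h]
        norm_num [hk]
    rw [hcardEB, hcardfB] at hsig
    -- the induction step data
    set k' : ℕ := k - 1 with hk'def
    set l' : ℕ := if 0 < k then l else l - 1 with hl'def
    have hl'eq : l' = if 0 < k then l else l - 1 := hl'def
    have hkl' : k' + l' = n := by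
      by_cases hk : 0 < k
      · rw [hk'def, hl'eq, if_pos hk]; omega
      · rw [hk'def, hl'eq, if_neg hk]; omega
    have hp2 : p = 2 * k' := by
      by_cases hk : 0 < k
      · rw [if_pos hk] at hsig; rw [hk'def]; omega
      · rw [if_neg hk] at hsig; rw [hk'def]; omega
    have hm2 : m = 2 * k' + 2 * l' := by
      by_cases hk : 0 < k
      · rw [hk'def, hl'eq, if_pos hk]; omega
      · rw [hk'def, hl'eq, if_neg hk]; omega
    set f3 : Basis (Fin (2*k' + 2*l')) ℝ W' :=
      (c.reindex ρ.symm).reindex (finCongr hm2) with hf3def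
    have hf3app : ∀ j : Fin (2*k'+2*l'),
        f3 j = (c.reindex ρ.symm) ((finCongr hm2).symm j) := by
      intro j; rw [hf3def, Basis.reindex_apply]
    have hf3orth : ∀ i j, i ≠ j → g' (f3 i) (f3 j) = 0 := by
      intro i j hij
      rw [hf3app, hf3app]
      exact hf2orth _ _ (fun h => hij ((finCongr hm2).symm.injective h))
    have hf3norm : ∀ j : Fin (2*k'+2*l'),
        g' (f3 j) (f3 j) = if (j:ℕ) < 2*k' then 1 else -1 := by
      intro j
      rw [hf3app, hf2norm]
      have hval : (((finCongr hm2).symm j : Fin m) : ℕ) = (j : ℕ) := by simp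
      rw [hval, hp2]
    obtain ⟨e', he'orth, he'norm, he'pair⟩ :=
      IH k' l' hkl' g' hg'symm J' hJ'2 hJ'skew f3 hf3orth hf3norm
    -- assemble the final basis
    set q2 : Fin (2*k'+2*l') → W := fun i => ↑(e' i) with hq2def
    have hq2W' : ∀ i, q2 i ∈ W' := fun i => (e' i).2
    have hq2orth : ∀ i j, i ≠ j → g (q2 i) (q2 j) = 0 := fun i j hij => he'orth i j hij
    have hq2norm : ∀ j : Fin (2*k'+2*l'),
        g (q2 j) (q2 j) = if (j:ℕ) < 2*k' then 1 else -1 := fun j => he'norm j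
    set F : Fin (2*k'+2*l'+1+1) → W := Fin.cons v (Fin.cons w q2) with hFdef
    have hForth : ∀ i j, i ≠ j → g (F i) (F j) = 0 := by
      rw [hFdef]
      apply cons_ortho g hsymm
      · intro i
        rcases Fin.eq_zero_or_eq_succ i with rfl | ⟨i', rfl⟩
        · rw [Fin.cons_zero]; exact hvw
        · rw [Fin.cons_succ]; exact ((hmem (q2 i')).mp (hq2W' i')).1
      · apply cons_ortho g hsymm
        · intro i; exact ((hmem (q2 i)).mp (hq2W' i)).2
        · exact hq2orth
    have hFnz : ∀ j, g (F j) (F j) ≠ 0 := by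
      intro j
      rw [hFdef]
      rcases Fin.eq_zero_or_eq_succ j with rfl | ⟨j', rfl⟩
      · rw [Fin.cons_zero, hvv]; rcases hε with h | h <;> rw [h] <;> norm_num
      · rw [Fin.cons_succ]
        rcases Fin.eq_zero_or_eq_succ j' with rfl | ⟨j'', rfl⟩
        · rw [Fin.cons_zero, hww]; rcases hε with h | h <;> rw [h] <;> norm_num
        · rw [Fin.cons_succ, hq2norm j'']; split <;> norm_num
    have hFli : LinearIndependent ℝ F := lindep_of_ortho g F hForth hFnz
    have hFcard : Fintype.card (Fin (2*k'+2*l'+1+1)) = finrank ℝ W := by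
      rw [Fintype.card_fin, hN]; omega
    set FB : Basis (Fin (2*k'+2*l'+1+1)) ℝ W :=
      basisOfLinearIndependentOfCardEqFinrank hFli hFcard with hFBdef
    have hFB : ⇑FB = F := coe_basisOfLinearIndependentOfCardEqFinrank hFli hFcard
    have hNN : 2*k'+2*l'+1+1 = 2*k+2*l := by omega
    have heapp : ∀ j : Fin (2*k+2*l),
        (FB.reindex (finCongr hNN)) j = F ⟨(j:ℕ), by omega⟩ := by
      intro j
      rw [Basis.reindex_apply, hFB]
      first
      | rfl
      | (congr 1; exact Fin.ext (by simp))
    -- evaluation lemmas for F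
    have hFeval0 : ∀ (h : 0 < 2*k'+2*l'+1+1), F ⟨0, h⟩ = v := by
      intro h; rw [hFdef, cons_mk_zero']
    have hFeval1 : ∀ (h : 1 < 2*k'+2*l'+1+1), F ⟨1, h⟩ = w := by
      intro h; rw [hFdef, cons_mk_succ', cons_mk_zero']
    have hFeval2 : ∀ (t : ℕ) (h : t+1+1 < 2*k'+2*l'+1+1),
        F ⟨t+1+1, h⟩ = q2 ⟨t, by omega⟩ := by
      intro t h; rw [hFdef, cons_mk_succ', cons_mk_succ']
    refine ⟨FB.reindex (finCongr hNN), ?_, ?_, ?_⟩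
    · intro i j hij
      rw [heapp i, heapp j]
      exact hForth _ _ fun h => hij (Fin.ext (show (i:ℕ) = (j:ℕ) from congrArg (fun x : Fin (2*k'+2*l'+1+1) => (x : ℕ)) h))
    · intro j
      obtain ⟨t, htj⟩ := j
      rw [heapp ⟨t, htj⟩]
      have hgoal : g (F ⟨t, by omega⟩) (F ⟨t, by omega⟩) = if t < 2*k then 1 else -1 := by
        rcases t with _ | t
        · rw [hFeval0, hvv]
          by_cases hk : 0 < k
          · rw [hεdef, if_pos hk, if_pos (show (0:ℕ) < 2*k by omega)]
          · rw [hεdef, if_neg hk, if_neg (show ¬ (0:ℕ) < 2*k by omega)]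
        rcases t with _ | t
        · rw [hFeval1, hww]
          by_cases hk : 0 < k
          · rw [hεdef, if_pos hk, if_pos (show (1:ℕ) < 2*k by omega)]
          · rw [hεdef, if_neg hk, if_neg (show ¬ (1:ℕ) < 2*k by omega)]
        · rw [hFeval2, hq2norm]
          have hiff : ((⟨t, by omega⟩ : Fin (2*k'+2*l')) : ℕ) < 2*k' ↔ t+1+1 < 2*k := by
            have hval : ((⟨t, by omega⟩ : Fin (2*k'+2*l')) : ℕ) = t := rfl
            rw [hval]
            have hk'eq : k' = k - 1 := hk'def
            by_cases hk : 0 < k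
            · constructor <;> intro <;> omega
            · constructor <;> intro <;> omega
          simp only [hiff]
      exact hgoal
    · intro i h1 h0
      obtain ⟨t, hti⟩ := i
      have hlt1 : 2*t+1 < 2*k+2*l := by omega
      have hlt0 : 2*t < 2*k+2*l := by omega
      show (FB.reindex (finCongr hNN)) ⟨2*t+1, hlt1⟩ = J ((FB.reindex (finCongr hNN)) ⟨2*t, hlt0⟩)
      rw [heapp ⟨2*t+1, hlt1⟩, heapp ⟨2*t, hlt0⟩]
      rcases t with _ | t
      · have ha : 1 < 2*k'+2*l'+1+1 := by omega
        have hb2 : 0 < 2*k'+2*l'+1+1 := by omega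
        show F ⟨1, ha⟩ = J (F ⟨0, hb2⟩)
        rw [hFeval0, hFeval1]
      · have ha : (2*t+1)+1+1 < 2*k'+2*l'+1+1 := by omega
        have hb2 : (2*t)+1+1 < 2*k'+2*l'+1+1 := by omega
        show F ⟨(2*t+1)+1+1, ha⟩ = J (F ⟨(2*t)+1+1, hb2⟩)
        rw [hFeval2 (2*t+1) ha, hFeval2 (2*t) hb2]
        have ht' : t < k' + l' := by
          have hk'eq : k' = k - 1 := hk'def
          by_cases hk : 0 < k
          · have := hl'eq; omega
          · have := hl'eq; omega
        have h3 := congrArg (Subtype.val) (he'pair ⟨t, ht'⟩ (by omega) (by omega))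
        exact h3



theorem stmt4 {W : Type*} [AddCommGroup W] [Module ℝ W]
    (k l : ℕ) (g : W →ₗ[ℝ] W →ₗ[ℝ] ℝ)
    (hsymm : ∀ v w, g v w = g w v)
    (J : W →ₗ[ℝ] W) (hJ2 : J ∘ₗ J = -LinearMap.id)
    (hskew : ∀ v w, g (J v) w = - g v (J w))
    -- the form `g` has signature `(2k, 2l)`: it admits an orthonormal basis
    (f : Basis (Fin (2 * k + 2 * l)) ℝ W)
    (hforth : ∀ i j, i ≠ j → g (f i) (f j) = 0)
    (hfnorm : ∀ i : Fin (2 * k + 2 * l),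
      g (f i) (f i) = if (i : ℕ) < 2 * k then 1 else -1) :
    ∃ e : Basis (Fin (2 * k + 2 * l)) ℝ W,
      (∀ i j, i ≠ j → g (e i) (e j) = 0) ∧
      (∀ i : Fin (2 * k + 2 * l),
        g (e i) (e i) = if (i : ℕ) < 2 * k then 1 else -1) ∧
      (∀ i : Fin (k + l),
        e ⟨2 * (i : ℕ) + 1, by have := i.isLt; omega⟩ =
          J (e ⟨2 * (i : ℕ), by have := i.isLt; omega⟩)) := by
  have hJ2' : ∀ x, J (J x) = -x := by
    intro x
    have h := LinearMap.ext_iff.mp hJ2 x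
    simpa using h
  obtain ⟨e, h1, h2, h3⟩ := main_ind (k + l) k l rfl g hsymm J hJ2' hskew f hforth hfnorm
  exact ⟨e, h1, h2, fun i => h3 i _ _⟩
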